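/- A function u* : Ω → ℝ is a local minimizer of the discrete Potts functional P_γ (i.e., there is ε > 0 such that P_γ(v) ≥ P_γ(u*) for all v with ‖v − u*‖₂ < ε) if and only if u* minimizes the quadratic functional v ↦ ‖Av − f‖₂² over the pattern subspace V(u*). -/

import Mathlib

set_option maxHeartbeats 1000000


open Finset

/-- The discrete image domain `Ω = {0,…,M−1} × {0,…,N−1} ⊆ ℤ²`. -/
noncomputable def gridDomain (M N : ℕ) : Finset (ℤ × ℤ) :=
  (Finset.Ico (0 : ℤ) (M : ℤ)) ×ˢ (Finset.Ico (0 : ℤ) (N : ℤ))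

/-- Pixels of the image domain. -/
abbrev Pix (M N : ℕ) := {p : ℤ × ℤ // p ∈ gridDomain M N}

/-- `‖∇_a u‖₀`: the number of pixels `p ∈ Ω` with `p + a ∈ Ω` and `u (p + a) ≠ u p`. -/
noncomputable def jumpCount (M N : ℕ) (u : Pix M N → ℝ) (a : ℤ × ℤ) : ℕ :=
  Set.ncard {p : Pix M N |
    ∃ h : (p : ℤ × ℤ) + a ∈ gridDomain M N, u ⟨(p : ℤ × ℤ) + a, h⟩ ≠ u p}

/-- The pattern subspace `V(u*)`: functions `v` that are constant wherever `u*` is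
constant. -/
def patternSubspace (M N S : ℕ) (a : Fin S → ℤ × ℤ) (ustar : Pix M N → ℝ) :
    Set (Pix M N → ℝ) :=
  {v | ∀ (s : Fin S) (p : Pix M N) (hq : (p : ℤ × ℤ) + a s ∈ gridDomain M N),
    ustar ⟨(p : ℤ × ℤ) + a s, hq⟩ = ustar p → v ⟨(p : ℤ × ℤ) + a s, hq⟩ = v p}

/-- The discrete Potts functional `P_γ(u) = ‖Au − f‖₂² + γ Σ_s ω_s‖∇_{a_s}u‖₀`. -/
noncomputable def pottsFunctional (M N m S : ℕ) (a : Fin S → ℤ × ℤ) (ω : Fin S → ℝ)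
    (A : (Pix M N → ℝ) →ₗ[ℝ] (Fin m → ℝ)) (f : Fin m → ℝ) (γ : ℝ)
    (u : Pix M N → ℝ) : ℝ :=
  (∑ i, (A u i - f i) ^ 2) + γ * ∑ s, ω s * (jumpCount M N u (a s) : ℝ)

/-- `u*` is a local minimizer of the discrete Potts functional `P_γ` if
and only if `u*` minimizes `v ↦ ‖Av − f‖₂²` over the pattern subspace `V(u*)`. -/
theorem local_min_potts_iff (M N m S : ℕ)
    (hM : 1 ≤ M) (hN : 1 ≤ N) (hS : 1 ≤ S)
    (a : Fin S → ℤ × ℤ) (ha : ∀ s, a s ≠ 0)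
    (ω : Fin S → ℝ) (hω : ∀ s, 0 < ω s)
    (A : (Pix M N → ℝ) →ₗ[ℝ] (Fin m → ℝ)) (f : Fin m → ℝ)
    (γ : ℝ) (hγ : 0 < γ)
    (ustar : Pix M N → ℝ) :
    (∃ ε > (0 : ℝ), ∀ v : Pix M N → ℝ,
        (∑ p, (v p - ustar p) ^ 2) < ε ^ 2 →
          pottsFunctional M N m S a ω A f γ ustar ≤ pottsFunctional M N m S a ω A f γ v)
      ↔ (∀ v ∈ patternSubspace M N S a ustar,
          (∑ i, (A ustar i - f i) ^ 2) ≤ ∑ i, (A v i - f i) ^ 2) := by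
  classical
  have hωnn : ∀ s, (0:ℝ) ≤ ω s := fun s => (hω s).le
  constructor
  · rintro ⟨ε, hε, hmin⟩ v hv
    set w : Pix M N → ℝ := fun p => v p - ustar p with hw
    have hAw : ∀ (t : ℝ) (i : Fin m),
        A (fun p => ustar p + t * w p) i = A ustar i + t * A w i := by
      intro t i
      have e : (fun p => ustar p + t * w p) = ustar + t • w := by
        funext p; simp [smul_eq_mul]
      rw [e, map_add, map_smul]
      simp [smul_eq_mul]
    set C : ℝ := ∑ i, (A ustar i - f i) * A w i with hC
    set B : ℝ := ∑ i, (A w i)^2 with hB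
    have hBnn : 0 ≤ B := Finset.sum_nonneg fun i _ => sq_nonneg _
    have expand : ∀ t : ℝ, (∑ i, (A (fun p => ustar p + t * w p) i - f i)^2)
        = (∑ i, (A ustar i - f i)^2) + 2*t*C + t^2*B := by
      intro t
      simp only [hAw t, hC, hB, Finset.mul_sum, ← Finset.sum_add_distrib]
      exact Finset.sum_congr rfl fun i _ => by ring
    have hJ : ∀ (t : ℝ) (s : Fin S),
        jumpCount M N (fun p => ustar p + t * w p) (a s) ≤ jumpCount M N ustar (a s) := by
      intro t s
      apply Set.ncard_le_ncard _ (Set.toFinite _)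
      rintro p ⟨h, hne⟩
      refine ⟨h, fun heq => hne ?_⟩
      have hvq := hv s p h heq
      simp only [hw]
      rw [heq, hvq]
    set Sw : ℝ := ∑ p, (w p)^2 with hSw
    have hSwnn : 0 ≤ Sw := Finset.sum_nonneg fun p _ => sq_nonneg _
    set t₀ : ℝ := ε / (Real.sqrt Sw + 1) with ht₀
    have hsq : Real.sqrt Sw ^ 2 = Sw := Real.sq_sqrt hSwnn
    have hsnn : 0 ≤ Real.sqrt Sw := Real.sqrt_nonneg _
    have ht₀pos : 0 < t₀ := div_pos hε (by linarith)
    have key : ∀ t : ℝ, |t| ≤ t₀ → 0 ≤ 2*t*C + t^2*B := by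
      intro t ht
      have hnorm : (∑ p, (ustar p + t * w p - ustar p)^2) < ε^2 := by
        have e : (∑ p, (ustar p + t * w p - ustar p)^2) = t^2 * Sw := by
          simp only [hSw, Finset.mul_sum]
          exact Finset.sum_congr rfl fun p _ => by ring
        rw [e]
        have h1 : t^2 ≤ t₀^2 := by
          nlinarith [sq_abs t, abs_nonneg t]
        have h2 : t₀^2 * Sw < ε^2 := by
          rw [ht₀, div_pow, div_mul_eq_mul_div, div_lt_iff₀ (by positivity)]
          nlinarith
        nlinarith
      have hPt := hmin (fun p => ustar p + t * w p) hnorm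
      simp only [pottsFunctional] at hPt
      rw [expand t] at hPt
      have hJs : (∑ s, ω s * (jumpCount M N (fun p => ustar p + t * w p) (a s) : ℝ))
          ≤ ∑ s, ω s * (jumpCount M N ustar (a s) : ℝ) :=
        Finset.sum_le_sum fun s _ =>
          mul_le_mul_of_nonneg_left (Nat.cast_le.2 (hJ t s)) (hωnn s)
      nlinarith [mul_le_mul_of_nonneg_left hJs hγ.le]
    have hC0 : C = 0 := by
      by_contra hC0
      have hCpos : 0 < C^2 := by positivity
      have hCabs : 0 < |C| := abs_pos.2 hC0
      set δ : ℝ := min (t₀ / |C|) (1 / (B+1)) with hδ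
      have hδpos : 0 < δ := lt_min (div_pos ht₀pos hCabs) (by positivity)
      have hδB : δ * B < 2 := by
        have h1 : δ * B ≤ (1/(B+1)) * B :=
          mul_le_mul_of_nonneg_right (min_le_right _ _) hBnn
        have h2 : (1/(B+1)) * B < 1 := by
          rw [div_mul_eq_mul_div, one_mul, div_lt_one (by linarith)]
          linarith
        linarith
      have habs : |(-(δ*C))| ≤ t₀ := by
        rw [abs_neg, abs_mul, abs_of_pos hδpos]
        calc δ * |C| ≤ (t₀/|C|) * |C| :=
              mul_le_mul_of_nonneg_right (min_le_left _ _) hCabs.le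
          _ = t₀ := div_mul_cancel₀ _ (ne_of_gt hCabs)
      have hk := key (-(δ*C)) habs
      nlinarith [mul_pos (mul_pos hδpos hCpos) (show (0:ℝ) < 2 - δ*B by linarith)]
    have hfin := expand 1
    have hv1 : (fun p => ustar p + (1:ℝ) * w p) = v := by
      funext p; simp [hw]
    rw [hv1] at hfin
    rw [hfin, hC0]
    nlinarith [hBnn]
  · intro hmin
    have hA : Continuous A := A.continuous_of_finiteDimensional
    have hQcont : Continuous (fun u : Pix M N → ℝ => ∑ i, (A u i - f i)^2) :=
      continuous_finset_sum _ fun i _ =>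
        (((continuous_apply i).comp hA).sub continuous_const).pow 2
    have hS0 : (Finset.univ : Finset (Fin S)).Nonempty := ⟨⟨0, hS⟩, Finset.mem_univ _⟩
    set ωmin : ℝ := Finset.univ.inf' hS0 ω with hωmin
    have hωminpos : 0 < ωmin := (Finset.lt_inf'_iff hS0).2 fun s _ => hω s
    have hωmins : ∀ s, ωmin ≤ ω s := fun s => Finset.inf'_le _ (Finset.mem_univ s)
    obtain ⟨η, hηpos, hη⟩ :=
      Metric.continuousAt_iff.1 hQcont.continuousAt (γ * ωmin) (by positivity)
    set gapf : Fin S × Pix M N → ℝ := fun sp =>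
      if h : (sp.2 : ℤ × ℤ) + a sp.1 ∈ gridDomain M N
      then |ustar ⟨(sp.2 : ℤ × ℤ) + a sp.1, h⟩ - ustar sp.2| else 1 with hgapf
    set JP : Finset (Fin S × Pix M N) := Finset.univ.filter (fun sp =>
      ∃ h : (sp.2 : ℤ × ℤ) + a sp.1 ∈ gridDomain M N,
        ustar ⟨(sp.2 : ℤ × ℤ) + a sp.1, h⟩ ≠ ustar sp.2) with hJP
    set δ : ℝ := if hne : JP.Nonempty then JP.inf' hne gapf else 1 with hδdef
    have hδpos : 0 < δ := by
      rw [hδdef]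
      split
      · next hne =>
          rw [Finset.lt_inf'_iff]
          rintro sp hsp
          rw [hJP, Finset.mem_filter] at hsp
          obtain ⟨-, h, hne'⟩ := hsp
          simp only [hgapf, dif_pos h]
          exact abs_pos.2 (sub_ne_zero.2 hne')
      · exact one_pos
    have hδle : ∀ (s : Fin S) (p : Pix M N) (h : (p:ℤ×ℤ) + a s ∈ gridDomain M N),
        ustar ⟨(p:ℤ×ℤ)+a s, h⟩ ≠ ustar p →
          δ ≤ |ustar ⟨(p:ℤ×ℤ)+a s, h⟩ - ustar p| := by
      intro s p h hne
      have hmem : (s, p) ∈ JP := by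
        rw [hJP, Finset.mem_filter]; exact ⟨Finset.mem_univ _, h, hne⟩
      have hne' : JP.Nonempty := ⟨_, hmem⟩
      rw [hδdef, dif_pos hne']
      have hle := Finset.inf'_le gapf hmem
      simpa only [hgapf, dif_pos h] using hle
    refine ⟨min (δ/2) η, lt_min (by linarith) hηpos, ?_⟩
    intro v hv
    have hεpos : (0:ℝ) < min (δ/2) η := lt_min (by linarith) hηpos
    have hpt : ∀ p, |v p - ustar p| < min (δ/2) η := by
      intro p
      have h1 : (v p - ustar p)^2 ≤ ∑ q, (v q - ustar q)^2 :=
        Finset.single_le_sum (f := fun q => (v q - ustar q)^2)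
          (fun q _ => sq_nonneg _) (Finset.mem_univ p)
      nlinarith [abs_nonneg (v p - ustar p), sq_abs (v p - ustar p)]
    have hdist : dist v ustar < η := by
      have h1 : dist v ustar < min (δ/2) η := by
        rw [dist_pi_lt_iff hεpos]
        intro p
        rw [Real.dist_eq]
        exact hpt p
      exact h1.trans_le (min_le_right _ _)
    have hQclose := hη hdist
    rw [Real.dist_eq] at hQclose
    have hεδ : min (δ/2) η ≤ δ/2 := min_le_left _ _
    have hsub : ∀ s : Fin S,
        {p : Pix M N | ∃ h : (p:ℤ×ℤ) + a s ∈ gridDomain M N,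
            ustar ⟨(p:ℤ×ℤ)+a s, h⟩ ≠ ustar p}
        ⊆ {p : Pix M N | ∃ h : (p:ℤ×ℤ) + a s ∈ gridDomain M N,
            v ⟨(p:ℤ×ℤ)+a s, h⟩ ≠ v p} := by
      rintro s p ⟨h, hne⟩
      refine ⟨h, fun heq => ?_⟩
      have h1 := hδle s p h hne
      have h2 := hpt p
      have h3 := hpt ⟨(p:ℤ×ℤ) + a s, h⟩
      have h5 : |ustar ⟨(p:ℤ×ℤ)+a s, h⟩ - ustar p|
          ≤ |v ⟨(p:ℤ×ℤ)+a s, h⟩ - ustar ⟨(p:ℤ×ℤ)+a s, h⟩| + |v p - ustar p| := by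
        have e : ustar ⟨(p:ℤ×ℤ)+a s, h⟩ - ustar p
            = -(v ⟨(p:ℤ×ℤ)+a s, h⟩ - ustar ⟨(p:ℤ×ℤ)+a s, h⟩) + (v p - ustar p) := by
          rw [heq]; ring
        calc |ustar ⟨(p:ℤ×ℤ)+a s, h⟩ - ustar p|
            = |(-(v ⟨(p:ℤ×ℤ)+a s, h⟩ - ustar ⟨(p:ℤ×ℤ)+a s, h⟩)) + (v p - ustar p)| := by
              rw [e]
          _ ≤ |(-(v ⟨(p:ℤ×ℤ)+a s, h⟩ - ustar ⟨(p:ℤ×ℤ)+a s, h⟩))| + |v p - ustar p| :=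
              abs_add_le _ _
          _ = |v ⟨(p:ℤ×ℤ)+a s, h⟩ - ustar ⟨(p:ℤ×ℤ)+a s, h⟩| + |v p - ustar p| := by
              rw [abs_neg]
      linarith
    have hcount : ∀ s, jumpCount M N ustar (a s) ≤ jumpCount M N v (a s) := by
      intro s
      exact Set.ncard_le_ncard (hsub s) (Set.toFinite _)
    by_cases hvV : v ∈ patternSubspace M N S a ustar
    · have hcount' : ∀ s, jumpCount M N v (a s) = jumpCount M N ustar (a s) := by
        intro s
        refine le_antisymm (Set.ncard_le_ncard ?_ (Set.toFinite _)) (hcount s)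
        rintro p ⟨h, hne⟩
        exact ⟨h, fun heq => hne (hvV s p h heq)⟩
      have hQ := hmin v hvV
      simp only [pottsFunctional]
      have e : ∑ s, ω s * (jumpCount M N v (a s) : ℝ)
          = ∑ s, ω s * (jumpCount M N ustar (a s) : ℝ) :=
        Finset.sum_congr rfl fun s _ => by rw [hcount' s]
      rw [e]
      linarith
    · simp only [patternSubspace, Set.mem_setOf_eq] at hvV
      push_neg at hvV
      obtain ⟨s₁, p₁, h₁, heq₁, hne₁⟩ := hvV
      have hp₁v : p₁ ∈ {p : Pix M N | ∃ h : (p:ℤ×ℤ) + a s₁ ∈ gridDomain M N,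
          v ⟨(p:ℤ×ℤ)+a s₁, h⟩ ≠ v p} := ⟨h₁, hne₁⟩
      have hp₁u : p₁ ∉ {p : Pix M N | ∃ h : (p:ℤ×ℤ) + a s₁ ∈ gridDomain M N,
          ustar ⟨(p:ℤ×ℤ)+a s₁, h⟩ ≠ ustar p} := by
        rintro ⟨h, hne⟩; exact hne heq₁
      have hstrict : jumpCount M N ustar (a s₁) + 1 ≤ jumpCount M N v (a s₁) := by
        have hins : insert p₁ {p : Pix M N | ∃ h : (p:ℤ×ℤ) + a s₁ ∈ gridDomain M N,
            ustar ⟨(p:ℤ×ℤ)+a s₁, h⟩ ≠ ustar p}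
            ⊆ {p : Pix M N | ∃ h : (p:ℤ×ℤ) + a s₁ ∈ gridDomain M N,
            v ⟨(p:ℤ×ℤ)+a s₁, h⟩ ≠ v p} := by
          rw [Set.insert_subset_iff]; exact ⟨hp₁v, hsub s₁⟩
        have hle := Set.ncard_le_ncard hins (Set.toFinite _)
        rwa [Set.ncard_insert_of_notMem hp₁u (Set.toFinite _)] at hle
      have hsum : (∑ s, ω s * (jumpCount M N ustar (a s) : ℝ)) + ω s₁
          ≤ ∑ s, ω s * (jumpCount M N v (a s) : ℝ) := by
        have h1 : ∀ s ∈ Finset.univ,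
            ω s * (jumpCount M N ustar (a s):ℝ) + (if s = s₁ then ω s₁ else 0)
              ≤ ω s * (jumpCount M N v (a s):ℝ) := by
          intro s _
          by_cases h : s = s₁
          · subst h
            simp only [eq_self_iff_true, if_true]
            have hc : (jumpCount M N ustar (a s) : ℝ) + 1
                ≤ (jumpCount M N v (a s) : ℝ) := by exact_mod_cast hstrict
            nlinarith [hω s]
          · simp only [if_neg h, add_zero]
            exact mul_le_mul_of_nonneg_left (Nat.cast_le.2 (hcount s)) (hωnn s)
        have h2 := Finset.sum_le_sum h1
        rwa [Finset.sum_add_distrib, Finset.sum_ite_eq' Finset.univ s₁ (fun _ => ω s₁),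
          if_pos (Finset.mem_univ s₁)] at h2
      simp only [pottsFunctional]
      have hA1 : γ * ((∑ s, ω s * (jumpCount M N ustar (a s):ℝ)) + ω s₁)
          ≤ γ * ∑ s, ω s * (jumpCount M N v (a s):ℝ) :=
        mul_le_mul_of_nonneg_left hsum hγ.le
      rw [mul_add] at hA1
      have hA2 : γ * ωmin ≤ γ * ω s₁ := mul_le_mul_of_nonneg_left (hωmins s₁) hγ.le
      have hA3 := abs_lt.1 hQclose
      obtain ⟨hA3l, -⟩ := hA3
      linarith
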